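/- Let I ⊆ ℝ be an interval and let u₁, u₋₁ : I → ℂ be differentiable functions satisfying, for all t ∈ I, u₁'(t) = −i·( (1 + 2·(u₁(t)·conj(u₋₁(t)) + u₋₁(t)·conj(u₁(t))))·u₁(t) + 2·(|u₁(t)|² + |u₋₁(t)|²)·u₋₁(t) ) and u₋₁'(t) = −i·( (1 + 2·(u₁(t)·conj(u₋₁(t)) + u₋₁(t)·conj(u₁(t))))·u₋₁(t) + 2·(|u₁(t)|² + |u₋₁(t)|²)·u₁(t) ). Then the functions t ↦ |u₁(t)|² + |u₋₁(t)|² and t ↦ u₁(t)·conj(u₋₁(t)) + u₋₁(t)·conj(u₁(t)) are constant on I. -/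

import Mathlib

lemma aux_const_of_deriv_zero {I : Set ℝ} (hI : Set.OrdConnected I) {f : ℝ → ℂ}
    (hf : ∀ t ∈ I, HasDerivWithinAt f 0 I t) :
    ∀ s ∈ I, ∀ t ∈ I, f s = f t := by
  intro s hs t ht
  have h := Convex.norm_image_sub_le_of_norm_hasDerivWithin_le (f' := fun _ => (0 : ℂ))
    (C := 0) (fun x hx => hf x hx) (fun x hx => by simp) hI.convex hs ht
  rw [zero_mul] at h
  exact (sub_eq_zero.mp (norm_le_zero_iff.mp h)).symm

lemma aux_abs_sq (z : ℂ) : ((‖z‖ : ℂ)) ^ 2 = z * (starRingEnd ℂ) z := by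
  rw [Complex.mul_conj]
  norm_cast
  exact (Complex.sq_norm z)

/-- Conservation of the mass `J₁ = |u₁|² + |uneg|²` and of `K₁ = u₁ū₋₁ + unegū₁`
along solutions of the two-dimensional Hamiltonian system on an interval `I`. -/
theorem conserved_quantities_two_mode_system (I : Set ℝ) (hI : Set.OrdConnected I)
    (u₁ uneg : ℝ → ℂ)
    (h₁ : ∀ t ∈ I, HasDerivWithinAt u₁
      (-Complex.I * ((1 + 2 * (u₁ t * (starRingEnd ℂ) (uneg t)
          + uneg t * (starRingEnd ℂ) (u₁ t))) * u₁ t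
        + 2 * ((‖u₁ t‖ : ℂ) ^ 2 + (‖uneg t‖ : ℂ) ^ 2) * uneg t)) I t)
    (h₂ : ∀ t ∈ I, HasDerivWithinAt uneg
      (-Complex.I * ((1 + 2 * (u₁ t * (starRingEnd ℂ) (uneg t)
          + uneg t * (starRingEnd ℂ) (u₁ t))) * uneg t
        + 2 * ((‖u₁ t‖ : ℂ) ^ 2 + (‖uneg t‖ : ℂ) ^ 2) * u₁ t)) I t) :
    (∀ s ∈ I, ∀ t ∈ I,
      ‖u₁ s‖ ^ 2 + ‖uneg s‖ ^ 2
        = ‖u₁ t‖ ^ 2 + ‖uneg t‖ ^ 2) ∧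
    (∀ s ∈ I, ∀ t ∈ I,
      u₁ s * (starRingEnd ℂ) (uneg s) + uneg s * (starRingEnd ℂ) (u₁ s)
        = u₁ t * (starRingEnd ℂ) (uneg t) + uneg t * (starRingEnd ℂ) (u₁ t)) := by
  have hJ : ∀ s ∈ I, ∀ t ∈ I,
      u₁ s * (starRingEnd ℂ) (u₁ s) + uneg s * (starRingEnd ℂ) (uneg s)
        = u₁ t * (starRingEnd ℂ) (u₁ t) + uneg t * (starRingEnd ℂ) (uneg t) := by
    apply aux_const_of_deriv_zero hI
    intro t ht
    have H := ((h₁ t ht).mul (h₁ t ht).star).add ((h₂ t ht).mul (h₂ t ht).star)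
    convert H using 1
    · rfl
    · rfl
    simp only [aux_abs_sq, map_mul, map_add, map_one, map_ofNat, map_neg, Complex.conj_conj,
      Complex.conj_I, Complex.star_def]
    ring
  have hK : ∀ s ∈ I, ∀ t ∈ I,
      u₁ s * (starRingEnd ℂ) (uneg s) + uneg s * (starRingEnd ℂ) (u₁ s)
        = u₁ t * (starRingEnd ℂ) (uneg t) + uneg t * (starRingEnd ℂ) (u₁ t) := by
    apply aux_const_of_deriv_zero hI
    intro t ht
    have H := ((h₁ t ht).mul (h₂ t ht).star).add ((h₂ t ht).mul (h₁ t ht).star)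
    convert H using 1
    · rfl
    · rfl
    simp only [aux_abs_sq, map_mul, map_add, map_one, map_ofNat, map_neg, Complex.conj_conj,
      Complex.conj_I, Complex.star_def]
    ring
  refine ⟨fun s hs t ht => ?_, hK⟩
  have := hJ s hs t ht
  rw [Complex.mul_conj, Complex.mul_conj, Complex.mul_conj, Complex.mul_conj] at this
  have h2 : (Complex.normSq (u₁ s) + Complex.normSq (uneg s) : ℝ)
      = Complex.normSq (u₁ t) + Complex.normSq (uneg t) := by exact_mod_cast this
  simpa [Complex.sq_norm] using h2
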